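/- Every cycle of length n ≥ 3 with n ≠ 5 admits a 3-star edge coloring; that is, for the cycle graph C_n with n ≥ 3 and n ≠ 5 one has χ'_s(C_n) ≤ 3. -/

import Mathlib

/-- The coloring function: colors of edges of the cycle `C_n` read along the cycle.
For `n ≡ 0 (mod 3)` the pattern is `012012…012`; for `n ≡ 1 (mod 3)` it is
`012…012 0102`; for `n ≡ 2 (mod 3)` it is `012…012 01021`. -/
def starC (n j : ℕ) : ℕ :=
  if n % 3 = 0 then j % 3
  else if n % 3 = 1 then
    (if j + 4 < n then j % 3 else if j + 4 = n then 0 else if j + 3 = n then 1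
     else if j + 2 = n then 0 else 2)
  else
    (if j + 5 < n then j % 3 else if j + 5 = n then 0 else if j + 4 = n then 1
     else if j + 3 = n then 0 else if j + 2 = n then 2 else 1)

lemma specA (n a : ℕ) (h : n % 3 = 0) : starC n a % 3 = a % 3 := by
  unfold starC; rw [if_pos h]; omega

lemma specB (n a : ℕ) (h : n % 3 = 1) :
    (a + 4 < n ∧ starC n a % 3 = a % 3) ∨ (a + 4 = n ∧ starC n a % 3 = 0) ∨
    (a + 3 = n ∧ starC n a % 3 = 1) ∨ (a + 2 = n ∧ starC n a % 3 = 0) ∨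
    (n ≤ a + 1 ∧ starC n a % 3 = 2) := by
  unfold starC; split_ifs <;> omega

lemma specC (n a : ℕ) (h : n % 3 = 2) :
    (a + 5 < n ∧ starC n a % 3 = a % 3) ∨ (a + 5 = n ∧ starC n a % 3 = 0) ∨
    (a + 4 = n ∧ starC n a % 3 = 1) ∨ (a + 3 = n ∧ starC n a % 3 = 0) ∨
    (a + 2 = n ∧ starC n a % 3 = 2) ∨ (n ≤ a + 1 ∧ starC n a % 3 = 1) := by
  unfold starC; split_ifs <;> omega

set_option maxHeartbeats 4000000 in
lemma starC_keyB (n : ℕ) (hB : n % 3 = 1) (j a1 a2 a3 : ℕ) (hj : j < n)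
    (hl1 : a1 < n) (hl2 : a2 < n) (hl3 : a3 < n)
    (h1 : a1 = j + 1 ∨ a1 + n = j + 1)
    (h2 : a2 = j + 2 ∨ a2 + n = j + 2)
    (h3 : a3 = j + 3 ∨ a3 + n = j + 3) :
    starC n a1 % 3 ≠ starC n j % 3 ∧
    ¬(starC n j % 3 = starC n a2 % 3 ∧ starC n a1 % 3 = starC n a3 % 3) := by
  rcases specB n j hB with ⟨hc0,he0⟩|⟨hc0,he0⟩|⟨hc0,he0⟩|⟨hc0,he0⟩|⟨hc0,he0⟩ <;>
  rcases specB n a1 hB with ⟨hc1,he1⟩|⟨hc1,he1⟩|⟨hc1,he1⟩|⟨hc1,he1⟩|⟨hc1,he1⟩ <;>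
  rcases specB n a2 hB with ⟨hc2,he2⟩|⟨hc2,he2⟩|⟨hc2,he2⟩|⟨hc2,he2⟩|⟨hc2,he2⟩ <;>
  rcases specB n a3 hB with ⟨hc3,he3⟩|⟨hc3,he3⟩|⟨hc3,he3⟩|⟨hc3,he3⟩|⟨hc3,he3⟩ <;>
  omega

set_option maxHeartbeats 8000000 in
lemma starC_keyC (n : ℕ) (hn : 3 ≤ n) (hC : n % 3 = 2) (hn5 : n ≠ 5) (j a1 a2 a3 : ℕ) (hj : j < n)
    (hl1 : a1 < n) (hl2 : a2 < n) (hl3 : a3 < n)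
    (h1 : a1 = j + 1 ∨ a1 + n = j + 1)
    (h2 : a2 = j + 2 ∨ a2 + n = j + 2)
    (h3 : a3 = j + 3 ∨ a3 + n = j + 3) :
    starC n a1 % 3 ≠ starC n j % 3 ∧
    ¬(starC n j % 3 = starC n a2 % 3 ∧ starC n a1 % 3 = starC n a3 % 3) := by
  rcases specC n j hC with ⟨hc0,he0⟩|⟨hc0,he0⟩|⟨hc0,he0⟩|⟨hc0,he0⟩|⟨hc0,he0⟩|⟨hc0,he0⟩ <;>
  rcases specC n a1 hC with ⟨hc1,he1⟩|⟨hc1,he1⟩|⟨hc1,he1⟩|⟨hc1,he1⟩|⟨hc1,he1⟩|⟨hc1,he1⟩ <;>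
  rcases specC n a2 hC with ⟨hc2,he2⟩|⟨hc2,he2⟩|⟨hc2,he2⟩|⟨hc2,he2⟩|⟨hc2,he2⟩|⟨hc2,he2⟩ <;>
  rcases specC n a3 hC with ⟨hc3,he3⟩|⟨hc3,he3⟩|⟨hc3,he3⟩|⟨hc3,he3⟩|⟨hc3,he3⟩|⟨hc3,he3⟩ <;>
  omega

lemma starC_key (n : ℕ) (hn : 3 ≤ n) (hn5 : n ≠ 5) (j : ℕ) (hj : j < n) :
    starC n ((j+1)%n) % 3 ≠ starC n j % 3 ∧
    ¬(starC n j % 3 = starC n ((j+2)%n) % 3 ∧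
      starC n ((j+1)%n) % 3 = starC n ((j+3)%n) % 3) := by
  have hmod : ∀ k, k ≤ 3 → (j+k) % n = j + k ∨ (j+k) % n + n = j + k := by
    intro k hk
    rcases Nat.lt_or_ge (j+k) n with h | h
    · exact Or.inl (Nat.mod_eq_of_lt h)
    · right
      rw [Nat.mod_eq_sub_mod h, Nat.mod_eq_of_lt (by omega)]
      omega
  have h1 := hmod 1 (by norm_num)
  have h2 := hmod 2 (by norm_num)
  have h3 := hmod 3 (by norm_num)
  have hl1 : (j+1) % n < n := Nat.mod_lt _ (by omega)
  have hl2 : (j+2) % n < n := Nat.mod_lt _ (by omega)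
  have hl3 : (j+3) % n < n := Nat.mod_lt _ (by omega)
  have hm3 : n % 3 = 0 ∨ n % 3 = 1 ∨ n % 3 = 2 := by omega
  rcases hm3 with hA | hB | hC
  · rw [specA n j hA, specA n ((j+1)%n) hA, specA n ((j+2)%n) hA, specA n ((j+3)%n) hA]
    omega
  · exact starC_keyB n hB j _ _ _ hj hl1 hl2 hl3 h1 h2 h3
  · exact starC_keyC n hn hC hn5 j _ _ _ hj hl1 hl2 hl3 h1 h2 h3

/-- A 3-star edge coloring of the cycle `x_0, x_1, …, x_{n-1}, x_0`, where the edge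
`x_i x_{i+1}` (indices mod `n`) receives color `g i`: the coloring is proper
(adjacent edges get distinct colors) and no path or cycle with four edges is bicolored
(for a proper coloring this means no four consecutive edges are colored `a b a b`). -/
def IsStarEdgeColoringCycle {α : Type*} (n : ℕ) (g : ZMod n → α) : Prop :=
  (∀ i, g i ≠ g (i + 1)) ∧ ∀ i, ¬ (g i = g (i + 2) ∧ g (i + 1) = g (i + 3))
theorem stmt_14 (n : ℕ) (hn : 3 ≤ n) (hn5 : n ≠ 5) :
    ∃ g : ZMod n → Fin 3, IsStarEdgeColoringCycle n g := by
  haveI : NeZero n := ⟨by omega⟩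
  have hval : ∀ (i : ZMod n) (k : ℕ), (i + (k : ZMod n)).val = (i.val + k) % n := by
    intro i k
    rw [ZMod.val_add, ZMod.val_natCast, Nat.add_mod, Nat.mod_mod_of_dvd _ dvd_rfl,
      ← Nat.add_mod]
  have e1 : ∀ i : ZMod n, (i + 1).val = (i.val + 1) % n := by
    intro i; have := hval i 1; rwa [Nat.cast_one] at this
  have e2 : ∀ i : ZMod n, (i + 2).val = (i.val + 2) % n := by
    intro i; have := hval i 2; rwa [Nat.cast_ofNat] at this
  have e3 : ∀ i : ZMod n, (i + 3).val = (i.val + 3) % n := by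
    intro i; have := hval i 3; rwa [Nat.cast_ofNat] at this
  refine ⟨fun i => Fin.ofNat 3 (starC n i.val), ?_, ?_⟩
  · intro i
    have key := (starC_key n hn hn5 i.val (ZMod.val_lt i)).1
    simp only [Ne, Fin.ext_iff, Fin.val_ofNat, e1]
    omega
  · intro i
    have key := (starC_key n hn hn5 i.val (ZMod.val_lt i)).2
    simp only [Fin.ext_iff, Fin.val_ofNat, e1, e2, e3]
    omega
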